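/- Let p be an odd prime and let G be the subgroup of GL(2, Z/p) generated by the matrices T = [[2,1],[−1,0]]^t acting by T(c_1,c_2) = (2c_1 − c_2, c_1) (Dehn twist) and the reflection-induced map ψ(c_1, c_2) = (−c_1, −c_2), together with the crosscap-slide map Y(c_1, c_2) = (−c_1 + 2c_2, c_2). Then every nonzero orbit of (Z/p)^2 under G contains an element of the form (k, 0) with 1 ≤ k ≤ p−1 or of the form (ℓ, ℓ) with 1 ≤ ℓ ≤ p−1. -/
import Mathlib

lemma pow_mat (p : ℕ) : ∀ n : ℕ, (!![2, -1; 1, 0] : Matrix (Fin 2) (Fin 2) (ZMod p))^n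
    = !![1 + (n : ZMod p), -(n : ZMod p); (n : ZMod p), 1 - (n : ZMod p)] := by
  intro n
  induction n with
  | zero => simp [Matrix.one_fin_two]
  | succ n ih =>
      rw [pow_succ, ih]
      push_cast
      ext i j
      fin_cases i <;> fin_cases j <;>
        simp [Matrix.mul_apply, Fin.sum_univ_two] <;> ring

/-- Let `p` be an odd prime and let `G ≤ GL(2, ℤ/p)` be the subgroup
generated by the Dehn-twist map `T(c₁,c₂) = (2c₁ - c₂, c₁)`, the reflection-induced
map `ψ(c₁,c₂) = (-c₁,-c₂)`, and the crosscap-slide map `Y(c₁,c₂) = (-c₁ + 2c₂, c₂)`.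
Then every nonzero orbit of `(ℤ/p)²` under `G` contains an element `(k, 0)` with
`k ≠ 0` or an element `(ℓ, ℓ)` with `ℓ ≠ 0`. -/
theorem stmt10 (p : ℕ) (hp : p.Prime) (hodd : Odd p)
    (T ψ Y : GL (Fin 2) (ZMod p))
    (hT : (T : Matrix (Fin 2) (Fin 2) (ZMod p)) = !![2, -1; 1, 0])
    (hψ : (ψ : Matrix (Fin 2) (Fin 2) (ZMod p)) = !![-1, 0; 0, -1])
    (hY : (Y : Matrix (Fin 2) (Fin 2) (ZMod p)) = !![-1, 2; 0, 1]) :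
    ∀ v : Fin 2 → ZMod p, v ≠ 0 →
      ∃ g ∈ Subgroup.closure ({T, ψ, Y} : Set (GL (Fin 2) (ZMod p))),
        ∃ k : ZMod p, k ≠ 0 ∧
          ((g : Matrix (Fin 2) (Fin 2) (ZMod p)).mulVec v = ![k, 0] ∨
           (g : Matrix (Fin 2) (Fin 2) (ZMod p)).mulVec v = ![k, k]) := by
  haveI : Fact p.Prime := ⟨hp⟩
  intro v hv
  have hTmem : T ∈ Subgroup.closure ({T, ψ, Y} : Set (GL (Fin 2) (ZMod p))) :=
    Subgroup.subset_closure (by simp)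
  by_cases heq : v 0 = v 1
  · refine ⟨1, Subgroup.one_mem _, v 0, ?_, Or.inr ?_⟩
    · intro h
      apply hv
      funext i
      fin_cases i
      · exact h
      · exact heq ▸ h
    · simp only [Units.val_one, Matrix.one_mulVec]
      funext i
      fin_cases i <;> simp [heq]
  · set d : ZMod p := v 0 - v 1 with hd
    have hdne : d ≠ 0 := sub_ne_zero.mpr heq
    set m : ZMod p := -(v 1) / d with hm
    refine ⟨T ^ m.val, pow_mem hTmem _, d, hdne, Or.inl ?_⟩
    have hcast : ((m.val : ℕ) : ZMod p) = m := by rw [ZMod.natCast_val, ZMod.cast_id]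
    have hmat : ((T ^ m.val : GL (Fin 2) (ZMod p)) : Matrix (Fin 2) (Fin 2) (ZMod p))
        = !![1 + m, -m; m, 1 - m] := by
      rw [Units.val_pow_eq_pow_val, hT, pow_mat, hcast]
    rw [hmat]
    funext i
    have hmd : m * d = -(v 1) := div_mul_cancel₀ _ hdne
    fin_cases i <;>
      simp only [Matrix.mulVec, dotProduct, Fin.sum_univ_two, Matrix.cons_val',
        Matrix.cons_val_zero, Matrix.cons_val_one, Matrix.head_cons, Matrix.empty_val',
        Matrix.cons_val_fin_one, Matrix.head_fin_const] <;>
      [show (1 + m) * v 0 + (-m) * v 1 = d; show m * v 0 + (1 - m) * v 1 = 0] <;>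
      · have : m * (v 0 - v 1) = -(v 1) := hmd
        ring_nf
        ring_nf at this
        linear_combination this + 0 * d
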